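/- Let v ∈ ℝ^n be a nonnegative vector, let n ≥ 1, and let Z be a symmetric matrix with Z_{ii} = 1 and Z_{ij} ≥ e^{-2L} for all i ≠ j (with L ≥ 0). Then the quadratic form Q(v) = Σ_{i,j} v_i v_j Z_{ij} satisfies Q(v) ≥ ((1 + (n-1) e^{-2L}) / n) · (Σ_i v_i)^2. -/
import Mathlib


theorem quadratic_form_lower_bound
    (n : ℕ) (hn : 1 ≤ n) (L : ℝ) (hL : 0 ≤ L)
    (v : Fin n → ℝ) (hv : ∀ i, 0 ≤ v i)
    (Z : Matrix (Fin n) (Fin n) ℝ) (hsymm : Z.IsSymm)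
    (hdiag : ∀ i, Z i i = 1)
    (hoff : ∀ i j, i ≠ j → Real.exp (-2 * L) ≤ Z i j) :
    ((1 + (n - 1) * Real.exp (-2 * L)) / n) * (∑ i, v i) ^ 2 ≤
      ∑ i, ∑ j, v i * v j * Z i j := by
  set e := Real.exp (-2 * L) with he
  have he0 : 0 < e := Real.exp_pos _
  have he1 : e ≤ 1 := by
    rw [he]
    apply Real.exp_le_one_iff.2
    nlinarith
  set S := ∑ i, v i with hS
  set T := ∑ i, v i ^ 2 with hT
  have hCS : S ^ 2 ≤ n * T := by
    simpa using sq_sum_le_card_mul_sum_sq (s := Finset.univ) (f := v)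
  have hstep : ∀ i j : Fin n, (if i = j then v i ^ 2 else e * (v i * v j)) ≤ v i * v j * Z i j := by
    intro i j
    by_cases h : i = j
    · simp [h, hdiag, sq]
    · simp only [h, if_false]
      have := hoff i j h
      have := mul_nonneg (hv i) (hv j)
      nlinarith
  have hsum : e * S ^ 2 + (1 - e) * T ≤ ∑ i, ∑ j, v i * v j * Z i j := by
    have h1 : ∑ i, ∑ j, (if i = j then v i ^ 2 else e * (v i * v j)) ≤
        ∑ i, ∑ j, v i * v j * Z i j :=
      Finset.sum_le_sum fun i _ => Finset.sum_le_sum fun j _ => hstep i j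
    have h2 : ∑ i, ∑ j : Fin n, (if i = j then v i ^ 2 else e * (v i * v j)) =
        e * S ^ 2 + (1 - e) * T := by
      have : ∀ i j : Fin n, (if i = j then v i ^ 2 else e * (v i * v j)) =
          e * (v i * v j) + (if i = j then (1 - e) * v i ^ 2 else 0) := by
        intro i j
        by_cases h : i = j <;> simp [h, sq] <;> ring
      simp_rw [this, Finset.sum_add_distrib, Finset.sum_ite_eq, Finset.mem_univ, if_true,
        ← Finset.mul_sum, ← Finset.sum_mul]
      ring
    linarith [h1, h2.symm.le]
  have hn' : (1:ℝ) ≤ n := by exact_mod_cast hn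
  have hnpos : (0:ℝ) < n := by linarith
  rw [div_mul_eq_mul_div, div_le_iff₀ hnpos]
  nlinarith [mul_le_mul_of_nonneg_left hCS (by linarith : (0:ℝ) ≤ 1 - e)]
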